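/- Let d ≥ 5 and let G(z) be the generating series counting monomials in the 3d−7 formal generators of degrees: one generator of cohomological degree 2 (c₀(2)), one of degree 2 (c₂(0)), and for each k from 3 to d−1, generators c_k(0), c_{k−1}(1), c_{k−2}(2) of degrees 2(k−1), 2(k−1), 2(k−1) respectively (i.e., a generator c_k(j) has degree 2(k+j−1)). Let a_{2i} be the number of monomials of degree 2i in these generators. Then a_{2i} equals the stable Betti number b_{2i} of the Hilbert scheme of points (coefficient of z^{2i} in R(z) = (1−z²)^{-2} Π_{k=1}^{i−1} (1−z^{2k+2})^{-3}) for all i ≤ d−2, while a_{2(d−1)} = b_{2(d−1)} − 3 and a_{2d} = b_{2d} − 9. -/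

import Mathlib

/-!
STATEMENT 10: Let `d ≥ 5`.  The Pi–Shen generating set `Σ` consists of `3d−7` generators:
`c₀(2)` and `c₂(0)` of cohomological degree 2, and, for each `k ∈ {3,…,d−1}`, the
generators `c_k(0), c_{k−1}(1), c_{k−2}(2)`, each of degree `2(k−1)` (a generator `c_k(j)`
has degree `2(k+j−1)`).  Let `a_{2i}` be the number of monomials of degree `2i` in these
generators, i.e. the coefficient of `z^{2i}` in
`G(z) = Π_{c_k(j) ∈ Σ} (1 − z^{2(k+j−1)})^{-1}
      = (1−z²)^{-2} Π_{k=3}^{d−1} (1−z^{2(k−1)})^{-3}`,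
and let `b_{2i}` be the stable Betti number of the Hilbert scheme of points on `ℙ²`, the
coefficient of `z^{2i}` in `R(z) = (1−z²)^{-2} Π_{k≥1} (1−z^{2k+2})^{-3}`.  Then
`a_{2i} = b_{2i}` for `i ≤ d−2`, `a_{2(d−1)} = b_{2(d−1)} − 3`, and `a_{2d} = b_{2d} − 9`.

Each factor `(1−z^a)^{-1}` (`a ≥ 1`) is the geometric series `Σ_{l≥0} z^{al}`; the infinite
product in `R` is truncated at `k ≤ d`, which does not affect coefficients of `z^j`, `j ≤ 2d`.
-/

open PowerSeries

/-- The geometric series `(1 − z^a)^{-1} = Σ_{l≥0} z^{al}` in `ℤ[[z]]` (for `a ≥ 1`). -/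
noncomputable def geomSeries (a : ℕ) : PowerSeries ℤ :=
  PowerSeries.mk fun m => if a ∣ m then 1 else 0

/-- The generating series `G(z)` of monomials in the `3d−7` Pi–Shen generators: two
generators of degree 2 and, for `3 ≤ k ≤ d−1`, three generators of degree `2(k−1)`. -/
noncomputable def piShenG (d : ℕ) : PowerSeries ℤ :=
  geomSeries 2 ^ 2 * ∏ k ∈ Finset.Icc 3 (d - 1), geomSeries (2 * (k - 1)) ^ 3

/-- The stable Betti number generating series
`R(z) = (1−z²)^{-2} Π_{k≥1}(1−z^{2k+2})^{-3}` of the Hilbert schemes of points on `ℙ²`,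
truncated at `k ≤ d` (higher factors do not affect coefficients of `z^j` for `j ≤ 2d`). -/
noncomputable def stableBettiSeries (d : ℕ) : PowerSeries ℤ :=
  geomSeries 2 ^ 2 * ∏ k ∈ Finset.Icc 1 d, geomSeries (2 * k + 2) ^ 3

lemma peel (f : ℕ → PowerSeries ℤ) (n : ℕ) :
    ∏ k ∈ Finset.Icc 1 (n+5), f k
      = (∏ k ∈ Finset.Icc 1 (n+2), f k) * f (n+3) * f (n+4) * f (n+5) := by
  rw [show n+5 = (n+4)+1 from rfl, Finset.prod_Icc_succ_top (by omega),
      show n+4 = (n+3)+1 from rfl, Finset.prod_Icc_succ_top (by omega),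
      show n+3 = (n+2)+1 from rfl, Finset.prod_Icc_succ_top (by omega)]

lemma prod_shift (n : ℕ) :
    (∏ k ∈ Finset.Icc 3 (n+4), geomSeries (2*(k-1))^3)
      = ∏ k ∈ Finset.Icc 1 (n+2), geomSeries (2*k+2)^3 := by
  rw [show (3:ℕ) = 1 + 2 from rfl, show n+4 = (n+2)+2 from rfl,
      ← Finset.map_add_right_Icc 1 (n+2) 2, Finset.prod_map]
  apply Finset.prod_congr rfl
  intro k _
  simp only [addRightEmbedding_apply]
  congr 2

lemma betti_eq (n : ℕ) :
    stableBettiSeries (n+5) = piShenG (n+5) *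
      (geomSeries (2*n+8)^3 * (geomSeries (2*n+10)^3 * geomSeries (2*n+12)^3)) := by
  unfold stableBettiSeries piShenG
  rw [peel (fun k => geomSeries (2*k+2)^3) n]
  rw [show (n+5)-1 = n+4 from rfl, prod_shift n]
  rw [show 2*(n+3)+2 = 2*n+8 from by omega, show 2*(n+4)+2 = 2*n+10 from by omega,
      show 2*(n+5)+2 = 2*n+12 from by omega]
  ring

lemma geom_coeff (a n : ℕ) :
    PowerSeries.coeff (R := ℤ) n (geomSeries a) = if a ∣ n then 1 else 0 := by
  simp [geomSeries]

lemma geom_mul_one_sub (a : ℕ) (ha : 0 < a) :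
    geomSeries a * (1 - X ^ a) = 1 := by
  ext n
  rw [mul_sub, mul_one, map_sub, PowerSeries.coeff_mul_X_pow', coeff_one, geom_coeff]
  by_cases h : a ≤ n
  · rw [if_pos h, geom_coeff, if_neg (by omega : ¬ n = 0)]
    have hiff : a ∣ n ↔ a ∣ n - a := by
      constructor
      · intro h'; exact Nat.dvd_sub h' dvd_rfl
      · intro h'
        have := Nat.dvd_add h' (dvd_refl a)
        rwa [Nat.sub_add_cancel h] at this
    by_cases h2 : a ∣ n
    · rw [if_pos h2, if_pos (hiff.mp h2)]; ring
    · rw [if_neg h2, if_neg (fun hc => h2 (hiff.mpr hc))]; ring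
  · rw [if_neg h, sub_zero]
    by_cases hn : n = 0
    · subst hn; simp
    · rw [if_neg hn, if_neg (fun hc => h (Nat.le_of_dvd (by omega) hc))]

lemma key_eq (n : ℕ) :
    piShenG (n+5) = stableBettiSeries (n+5) *
      ((1 - X^(2*n+8))^3 * ((1 - X^(2*n+10))^3 * (1 - X^(2*n+12))^3)) := by
  have e8 := geom_mul_one_sub (2*n+8) (by omega)
  have e10 := geom_mul_one_sub (2*n+10) (by omega)
  have e12 := geom_mul_one_sub (2*n+12) (by omega)
  rw [betti_eq n]
  calc piShenG (n+5)
      = piShenG (n+5) *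
        ((geomSeries (2*n+8) * (1 - X^(2*n+8)))^3 *
         ((geomSeries (2*n+10) * (1 - X^(2*n+10)))^3 *
          (geomSeries (2*n+12) * (1 - X^(2*n+12)))^3)) := by
        rw [e8, e10, e12]; ring
    _ = _ := by ring

lemma exists_D (n : ℕ) : ∃ D : PowerSeries ℤ,
    (1 - X^(2*n+8))^3 * ((1 - X^(2*n+10))^3 * (1 - X^(2*n+12))^3)
      = 1 - 3*X^(2*n+8) - 3*X^(2*n+10) + X^(2*n+11) * D := by
  set u : PowerSeries ℤ := X^(2*n+8) with hu
  set v : PowerSeries ℤ := X^(2*n+10) with hv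
  set w : PowerSeries ℤ := X^(2*n+12) with hw
  have hdvd : (X : PowerSeries ℤ)^(2*n+11) ∣
      ((1-u)^3 * ((1-v)^3 * (1-w)^3) - (1 - 3*u - 3*v)) := by
    have key : (1-u)^3 * ((1-v)^3 * (1-w)^3) - (1 - 3*u - 3*v)
        = u^2 * ((3-u)*(1-3*v) + v^2*(3-u)*(3-v)) + v^2 * ((3-v)*(1-3*u)) + u*v*9
          + w * ((1-u)^3*(1-v)^3*(-3+3*w-w^2)) := by ring
    rw [key]
    have hu2 : (X : PowerSeries ℤ)^(2*n+11) ∣ u^2 := by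
      rw [hu, ← pow_mul]; exact pow_dvd_pow X (by omega)
    have hv2 : (X : PowerSeries ℤ)^(2*n+11) ∣ v^2 := by
      rw [hv, ← pow_mul]; exact pow_dvd_pow X (by omega)
    have huv : (X : PowerSeries ℤ)^(2*n+11) ∣ u*v := by
      rw [hu, hv, ← pow_add]; exact pow_dvd_pow X (by omega)
    have hww : (X : PowerSeries ℤ)^(2*n+11) ∣ w := by
      rw [hw]; exact pow_dvd_pow X (by omega)
    exact dvd_add (dvd_add (dvd_add (hu2.mul_right _) (hv2.mul_right _))
      (huv.mul_right _)) (hww.mul_right _)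
  obtain ⟨D, hD⟩ := hdvd
  exact ⟨D, by linear_combination hD⟩

lemma X3_dvd_geom_sub_one (m : ℕ) (hm : 3 ≤ m) :
    (X : PowerSeries ℤ)^3 ∣ geomSeries m - 1 := by
  rw [PowerSeries.X_pow_dvd_iff]
  intro j hj
  rw [map_sub, geom_coeff, PowerSeries.coeff_one]
  interval_cases j
  · simp
  · rw [if_neg (fun hc => by omega : ¬ (1:ℕ) = 0),
        if_neg (fun hc => by have := Nat.le_of_dvd one_pos hc; omega)]
    ring
  · rw [if_neg (fun hc => by omega : ¬ (2:ℕ) = 0),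
        if_neg (fun hc => by have := Nat.le_of_dvd two_pos hc; omega)]
    ring

lemma X3_dvd_cube_sub_one (m : ℕ) (hm : 3 ≤ m) :
    (X : PowerSeries ℤ)^3 ∣ geomSeries m ^ 3 - 1 := by
  have h := (X3_dvd_geom_sub_one m hm).mul_right
    (geomSeries m ^2 + geomSeries m + 1)
  rwa [show (geomSeries m - 1) * (geomSeries m ^2 + geomSeries m + 1)
      = geomSeries m ^ 3 - 1 from by ring] at h

lemma X3_dvd_prod_sub_one (d : ℕ) :
    (X : PowerSeries ℤ)^3 ∣ (∏ k ∈ Finset.Icc 1 d, geomSeries (2*k+2)^3) - 1 := by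
  induction d with
  | zero => simp
  | succ d ih =>
    rw [Finset.prod_Icc_succ_top (by omega)]
    have h1 := ih.mul_right (geomSeries (2*(d+1)+2)^3)
    have h2 := X3_dvd_cube_sub_one (2*(d+1)+2) (by omega)
    have := dvd_add h1 h2
    rwa [show ((∏ k ∈ Finset.Icc 1 d, geomSeries (2*k+2)^3) - 1) * geomSeries (2*(d+1)+2)^3
        + (geomSeries (2*(d+1)+2)^3 - 1)
        = (∏ k ∈ Finset.Icc 1 d, geomSeries (2*k+2)^3) * geomSeries (2*(d+1)+2)^3 - 1
        from by ring] at this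

lemma coeff_zero_betti (d : ℕ) :
    PowerSeries.coeff (R := ℤ) 0 (stableBettiSeries d) = 1 := by
  rw [PowerSeries.coeff_zero_eq_constantCoeff]
  unfold stableBettiSeries
  rw [map_mul, map_pow, map_prod]
  simp [geomSeries]

lemma coeff_two_betti (d : ℕ) :
    PowerSeries.coeff (R := ℤ) 2 (stableBettiSeries d) = 2 := by
  obtain ⟨E, hE⟩ := X3_dvd_prod_sub_one d
  unfold stableBettiSeries
  rw [show (∏ k ∈ Finset.Icc 1 d, geomSeries (2*k+2)^3) = 1 + X^3 * E
      from by linear_combination hE]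
  rw [show geomSeries 2 ^2 * (1 + X^3*E) = geomSeries 2^2 + X^3 * (geomSeries 2^2 * E)
      from by ring, map_add]
  have h2 : PowerSeries.coeff (R := ℤ) 2 (X^3 * (geomSeries 2^2 * E)) = 0 :=
    (PowerSeries.X_pow_dvd_iff.mp (dvd_mul_right _ _)) 2 (by omega)
  rw [h2, add_zero, pow_two, PowerSeries.coeff_mul,
      Finset.Nat.sum_antidiagonal_eq_sum_range_succ_mk]
  simp [geom_coeff, Finset.sum_range_succ]

/-- The monomial counts `a_{2i}` in the Pi–Shen generators equal the
stable Betti numbers `b_{2i}` of the Hilbert schemes of points for `i ≤ d−2`, while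
`a_{2(d−1)} = b_{2(d−1)} − 3` and `a_{2d} = b_{2d} − 9`. -/
theorem stmt10 (d : ℕ) (hd : 5 ≤ d) :
    (∀ i : ℕ, i ≤ d - 2 →
      PowerSeries.coeff (R := ℤ) (2 * i) (piShenG d)
        = PowerSeries.coeff (R := ℤ) (2 * i) (stableBettiSeries d)) ∧
    PowerSeries.coeff (R := ℤ) (2 * (d - 1)) (piShenG d)
      = PowerSeries.coeff (R := ℤ) (2 * (d - 1)) (stableBettiSeries d) - 3 ∧
    PowerSeries.coeff (R := ℤ) (2 * d) (piShenG d)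
      = PowerSeries.coeff (R := ℤ) (2 * d) (stableBettiSeries d) - 9 := by
  obtain ⟨n, rfl⟩ : ∃ n, d = n + 5 := ⟨d - 5, by omega⟩
  obtain ⟨D, hD⟩ := exists_D n
  set R := stableBettiSeries (n+5) with hR
  have hG : piShenG (n+5)
      = R - (R * X^(2*n+8) + R * X^(2*n+8) + R * X^(2*n+8))
          - (R * X^(2*n+10) + R * X^(2*n+10) + R * X^(2*n+10))
          + X^(2*n+11) * (R * D) := by
    rw [key_eq n, hD]; ring
  have hc : ∀ m : ℕ, m ≤ 2*n+10 →
      PowerSeries.coeff (R := ℤ) m (piShenG (n+5))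
        = PowerSeries.coeff (R := ℤ) m R
          - 3 * (if 2*n+8 ≤ m then PowerSeries.coeff (R := ℤ) (m - (2*n+8)) R else 0)
          - 3 * (if 2*n+10 ≤ m then PowerSeries.coeff (R := ℤ) (m - (2*n+10)) R else 0) := by
    intro m hm
    have hz : PowerSeries.coeff (R := ℤ) m (X^(2*n+11) * (R * D)) = 0 :=
      (PowerSeries.X_pow_dvd_iff.mp (dvd_mul_right _ _)) m (by omega)
    rw [hG]
    simp only [map_add, map_sub, PowerSeries.coeff_mul_X_pow', hz]
    ring
  refine ⟨?_, ?_, ?_⟩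
  · intro i hi
    rw [hc (2*i) (by omega), if_neg (by omega), if_neg (by omega)]; ring
  · rw [show 2*((n+5)-1) = 2*n+8 from by omega,
        hc (2*n+8) (by omega), if_pos (by omega), if_neg (by omega),
        show 2*n+8 - (2*n+8) = 0 from by omega, hR, coeff_zero_betti]; ring
  · rw [show 2*(n+5) = 2*n+10 from by omega,
        hc (2*n+10) (by omega), if_pos (by omega), if_pos (by omega),
        show 2*n+10 - (2*n+8) = 2 from by omega,
        show 2*n+10 - (2*n+10) = 0 from by omega, hR, coeff_two_betti, coeff_zero_betti]
    ring
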